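/- Let σ = z + z⁻¹ and τ = w + w⁻¹ with σ ≠ ±2 and τ ≠ ±2, N = m + n. Then det(H_{N;0} - D_{m,n;σ,τ}) = (-1)^{m+n} · γ_{m,n}(z,w) / ((z - z⁻¹)(w - w⁻¹)), where γ_{m,n}(z,w) = (z^{m+1} - z^{-m-1})(w^{n+1} - w^{-n-1}) - (z^m - z^{-m})(w^n - w^{-n}). -/

import Mathlib

open Matrix

noncomputable def Hmat (N : ℕ) (c : ℂ) : Matrix (Fin N) (Fin N) ℂ :=
  fun i j => if (i : ℕ) = (j : ℕ) then c
    else if (i : ℕ) + 1 = (j : ℕ) ∨ (j : ℕ) + 1 = (i : ℕ) then 1 else 0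

noncomputable def Dst (m n : ℕ) (σ τ : ℂ) : Matrix (Fin (m + n)) (Fin (m + n)) ℂ :=
  Matrix.diagonal (fun i => if (i : ℕ) < m then σ else τ)

noncomputable def gammaF (m n : ℕ) (z w : ℂ) : ℂ :=
  (z ^ (m + 1) - z ^ (-(m + 1) : ℤ)) * (w ^ (n + 1) - w ^ (-(n + 1) : ℤ)) -
    (z ^ m - z ^ (-(m : ℤ))) * (w ^ n - w ^ (-(n : ℤ)))


noncomputable def tri (a : ℕ → ℂ) (N : ℕ) : Matrix (Fin N) (Fin N) ℂ :=
  fun i j => if (i : ℕ) = (j : ℕ) then a i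
    else if (i : ℕ) + 1 = (j : ℕ) ∨ (j : ℕ) + 1 = (i : ℕ) then 1 else 0

lemma tri_submatrix_succ (a : ℕ → ℂ) (N : ℕ) :
    (tri a (N + 1)).submatrix Fin.succ Fin.succ = tri (fun k => a (k + 1)) N := by
  ext i j
  simp only [Matrix.submatrix_apply, tri, Fin.val_succ]
  by_cases h : (i : ℕ) = j
  · simp [h]
  · rw [if_neg (by omega), if_neg h]
    by_cases h2 : (i : ℕ) + 1 = j ∨ (j : ℕ) + 1 = i
    · rw [if_pos (by omega), if_pos h2]
    · rw [if_neg (by omega), if_neg h2]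

lemma tri_rec (a : ℕ → ℂ) (N : ℕ) :
    (tri a (N + 2)).det =
      a 0 * (tri (fun k => a (k + 1)) (N + 1)).det -
        (tri (fun k => a (k + 2)) N).det := by
  rw [Matrix.det_succ_row_zero, Fin.sum_univ_succ, Fin.sum_univ_succ]
  have hrest : ∀ j : Fin N, ((-1 : ℂ)) ^ ((j.succ.succ : Fin (N + 2)) : ℕ) *
      tri a (N + 2) 0 j.succ.succ *
      ((tri a (N + 2)).submatrix Fin.succ j.succ.succ.succAbove).det = 0 := by
    intro j
    have : tri a (N + 2) 0 j.succ.succ = 0 := by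
      simp only [tri, Fin.val_succ, Fin.val_zero]
      have h1 : ¬ ((0:ℕ) = (j:ℕ) + 1 + 1) := by omega
      have h2 : ¬ ((0:ℕ) + 1 = (j:ℕ) + 1 + 1 ∨ (j:ℕ) + 1 + 1 + 1 = 0) := by omega
      simp [h1, h2]
    rw [this]; ring
  rw [Finset.sum_congr rfl (fun j _ => hrest j), Finset.sum_const_zero]
  have h00 : tri a (N + 2) 0 0 = a 0 := by simp [tri]
  have h01 : tri a (N + 2) 0 (Fin.succ 0) = 1 := by
    simp only [tri, Fin.val_succ, Fin.val_zero]
    rw [if_neg (by omega), if_pos (by tauto)]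
  have hm0 : ((tri a (N + 2)).submatrix Fin.succ (0 : Fin (N + 2)).succAbove).det
      = (tri (fun k => a (k + 1)) (N + 1)).det := by
    rw [Fin.succAbove_zero, tri_submatrix_succ]
  have hm1 : ((tri a (N + 2)).submatrix Fin.succ ((0 : Fin (N+1)).succ).succAbove).det
      = (tri (fun k => a (k + 2)) N).det := by
    rw [Matrix.det_succ_column_zero, Fin.sum_univ_succ]
    have hc : ∀ i : Fin N, ((-1:ℂ)) ^ ((i.succ : Fin (N+1)) : ℕ) *
        (tri a (N + 2)).submatrix Fin.succ ((0 : Fin (N+1)).succ).succAbove i.succ 0 *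
        (((tri a (N + 2)).submatrix Fin.succ ((0 : Fin (N+1)).succ).succAbove).submatrix
          i.succ.succAbove Fin.succ).det = 0 := by
      intro i
      have : (tri a (N + 2)).submatrix Fin.succ ((0 : Fin (N+1)).succ).succAbove i.succ 0 = 0 := by
        have hcol : (((0 : Fin (N+1)).succ).succAbove 0 : ℕ) = 0 := by
          rw [Fin.succAbove_of_castSucc_lt _ _ (by simp [Fin.lt_def])]
          simp
        simp only [Matrix.submatrix_apply, tri, Fin.val_succ, hcol]
        rw [if_neg (by omega), if_neg (by omega)]
      rw [this]; ring
    rw [Finset.sum_congr rfl (fun i _ => hc i), Finset.sum_const_zero, add_zero]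
    have hcol : (((0 : Fin (N+1)).succ).succAbove 0 : ℕ) = 0 := by
      rw [Fin.succAbove_of_castSucc_lt _ _ (by simp [Fin.lt_def])]
      simp
    have hent : (tri a (N + 2)).submatrix Fin.succ ((0 : Fin (N+1)).succ).succAbove 0 0 = 1 := by
      simp only [Matrix.submatrix_apply, tri, Fin.val_succ, Fin.val_zero, hcol]
      rw [if_neg (by omega), if_pos (by tauto)]
    rw [hent]
    have hmat : (((tri a (N + 2)).submatrix Fin.succ ((0 : Fin (N+1)).succ).succAbove).submatrix
        (0 : Fin (N+1)).succAbove Fin.succ) = tri (fun k => a (k + 2)) N := by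
      ext i j
      have hcj : ((((0 : Fin (N+1)).succ).succAbove j.succ : Fin (N+2)) : ℕ) = (j : ℕ) + 2 := by
        rw [Fin.succAbove_of_le_castSucc _ _ (by simp [Fin.le_def])]
        simp
      simp only [Matrix.submatrix_apply, Fin.succAbove_zero, tri, Fin.val_succ, hcj]
      by_cases h : (i : ℕ) = j
      · rw [if_pos (by omega), if_pos h]
      · rw [if_neg (by omega), if_neg h]
        by_cases h2 : (i : ℕ) + 1 = j ∨ (j : ℕ) + 1 = i
        · rw [if_pos (by omega), if_pos h2]
        · rw [if_neg (by omega), if_neg h2]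
    rw [hmat]
    simp
  rw [h00, h01, hm0, hm1]
  simp
  ring


noncomputable def bseq (m : ℕ) (σ τ : ℂ) : ℕ → ℂ := fun k => -(if k < m then σ else τ)

lemma bseq_shift (m : ℕ) (σ τ : ℂ) : (fun k => bseq (m + 1) σ τ (k + 1)) = bseq m σ τ := by
  funext k
  simp only [bseq, Nat.add_lt_add_iff_right]

lemma bseq0_shift (j : ℕ) (σ τ : ℂ) : (fun k => bseq 0 σ τ (k + j)) = bseq 0 σ τ := by
  funext k
  simp [bseq]

lemma pkey (z : ℂ) (hz : z ≠ 0) (k : ℕ) :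
    z ^ (k + 2) - z⁻¹ ^ (k + 2) =
      (z + z⁻¹) * (z ^ (k + 1) - z⁻¹ ^ (k + 1)) - (z ^ k - z⁻¹ ^ k) := by
  have h : z * z⁻¹ = 1 := mul_inv_cancel₀ hz
  field_simp
  linear_combination (z * z⁻¹ ^ k - z⁻¹ * z⁻¹ ^ k) * h

lemma main_aux (z w : ℂ) (hz : z ≠ 0) (hw : w ≠ 0) (N : ℕ) :
    ∀ m n : ℕ, m + n = N →
    (tri (bseq m (z + z⁻¹) (w + w⁻¹)) (m + n)).det * ((z - z⁻¹) * (w - w⁻¹)) =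
      (-1 : ℂ) ^ (m + n) *
        ((z ^ (m + 1) - z⁻¹ ^ (m + 1)) * (w ^ (n + 1) - w⁻¹ ^ (n + 1)) -
          (z ^ m - z⁻¹ ^ m) * (w ^ n - w⁻¹ ^ n)) := by
  induction N using Nat.strong_induction_on with
  | _ N ih =>
    intro m n hmn
    match m, n with
    | 0, 0 =>
      simp only [Nat.add_zero]
      rw [show (tri (bseq 0 (z + z⁻¹) (w + w⁻¹)) 0).det = 1 from Matrix.det_fin_zero]
      ring
    | 0, 1 =>
      rw [show ((0:ℕ) + 1) = 1 from rfl, Matrix.det_fin_one]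
      have : tri (bseq 0 (z + z⁻¹) (w + w⁻¹)) 1 0 0 = -(w + w⁻¹) := by
        simp [tri, bseq]
      rw [this]
      ring
    | 1, 0 =>
      rw [show ((1:ℕ) + 0) = 1 from rfl, Matrix.det_fin_one]
      have : tri (bseq 1 (z + z⁻¹) (w + w⁻¹)) 1 0 0 = -(z + z⁻¹) := by
        simp [tri, bseq]
      rw [this]
      ring
    | 0, (n+2) =>
      rw [Nat.zero_add (n+2)]
      rw [tri_rec, bseq0_shift 1, bseq0_shift 2]
      have e1 := ih (n + 1) (by omega) 0 (n + 1) (Nat.zero_add _)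
      have e2 := ih n (by omega) 0 n (Nat.zero_add _)
      rw [Nat.zero_add (n+1)] at e1
      rw [Nat.zero_add n] at e2
      have ha : bseq 0 (z + z⁻¹) (w + w⁻¹) 0 = -(w + w⁻¹) := by simp [bseq]
      rw [ha]
      have key := pkey w hw (n + 1)
      have hww : w * w⁻¹ = 1 := mul_inv_cancel₀ hw
      linear_combination (-(w + w⁻¹)) * e1 - e2 +
        ((-1:ℂ)) ^ n * (z - z⁻¹) * key +
        2 * ((-1:ℂ)) ^ n * (z - z⁻¹) * (w ^ (n+1) - w⁻¹ ^ (n+1)) * hww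
    | 1, (n+1) =>
      rw [show (1:ℕ) + (n + 1) = n + 2 from by omega]
      rw [tri_rec]
      rw [show (fun k => bseq 1 (z + z⁻¹) (w + w⁻¹) (k + 1)) = bseq 0 (z + z⁻¹) (w + w⁻¹) from
        bseq_shift 0 _ _]
      rw [show (fun k => bseq 1 (z + z⁻¹) (w + w⁻¹) (k + 2)) = bseq 0 (z + z⁻¹) (w + w⁻¹) from by
        funext k; simp [bseq]]
      have e1 := ih (n + 1) (by omega) 0 (n + 1) (Nat.zero_add _)
      have e2 := ih n (by omega) 0 n (Nat.zero_add _)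
      rw [Nat.zero_add (n+1)] at e1
      rw [Nat.zero_add n] at e2
      have ha : bseq 1 (z + z⁻¹) (w + w⁻¹) 0 = -(z + z⁻¹) := by simp [bseq]
      rw [ha]
      linear_combination (-(z + z⁻¹)) * e1 - e2
    | (m+2), n =>
      rw [show (m + 2) + n = (m + n) + 2 from by omega]
      rw [tri_rec]
      rw [show (fun k => bseq (m + 2) (z + z⁻¹) (w + w⁻¹) (k + 1)) =
          bseq (m + 1) (z + z⁻¹) (w + w⁻¹) from bseq_shift (m+1) _ _]
      rw [show (fun k => bseq (m + 2) (z + z⁻¹) (w + w⁻¹) (k + 2)) =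
          bseq m (z + z⁻¹) (w + w⁻¹) from by
        funext k; simp only [bseq, Nat.add_lt_add_iff_right]]
      have e1 := ih (m + n + 1) (by omega) (m + 1) n (by omega)
      have e2 := ih (m + n) (by omega) m n rfl
      rw [show (m + 1) + n = m + n + 1 from by omega] at e1
      have ha : bseq (m + 2) (z + z⁻¹) (w + w⁻¹) 0 = -(z + z⁻¹) := by simp [bseq]
      rw [ha]
      have k1 := pkey z hz (m + 1)
      have k2 := pkey z hz m
      have hzz : z * z⁻¹ = 1 := mul_inv_cancel₀ hz
      linear_combination (-(z + z⁻¹)) * e1 - e2 +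
        ((-1:ℂ)) ^ (m + n) * ((w ^ (n + 1) - w⁻¹ ^ (n + 1)) * k1 - (w ^ n - w⁻¹ ^ n) * k2) +
        2 * ((-1:ℂ)) ^ (m + n) * ((z ^ (m+1) - z⁻¹ ^ (m+1)) * (w ^ (n+1) - w⁻¹ ^ (n+1)) -
          (z ^ m - z⁻¹ ^ m) * (w ^ n - w⁻¹ ^ n)) * hzz


lemma pencil_eq_tri (m n : ℕ) (σ τ : ℂ) :
    Hmat (m + n) 0 - Dst m n σ τ = tri (bseq m σ τ) (m + n) := by
  ext i j
  by_cases h : i = j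
  · subst h
    simp [Hmat, Dst, tri, bseq, Matrix.diagonal]
  · have h' : (i : ℕ) ≠ (j : ℕ) := fun hc => h (Fin.val_injective hc)
    simp only [Matrix.sub_apply, Hmat, Dst, Matrix.diagonal_apply_ne _ h, tri, if_neg h',
      sub_zero]

lemma sub_inv_ne_zero (z : ℂ) (hz : z ≠ 0) (h2 : z + z⁻¹ ≠ 2) (h2' : z + z⁻¹ ≠ -2) :
    z - z⁻¹ ≠ 0 := by
  intro h
  have hzz : z * z⁻¹ = 1 := mul_inv_cancel₀ hz
  have hfac : (z - 1) * (z + 1) = 0 := by linear_combination z * h + hzz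
  rcases mul_eq_zero.mp hfac with h1 | h1
  · have : z = 1 := by linear_combination h1
    exact h2 (by rw [this]; norm_num)
  · have : z = -1 := by linear_combination h1
    exact h2' (by rw [this]; norm_num)


theorem det_pencil_formula (m n : ℕ) (z w : ℂ) (hz : z ≠ 0) (hw : w ≠ 0)
    (hz2 : z + z⁻¹ ≠ 2) (hz2' : z + z⁻¹ ≠ -2)
    (hw2 : w + w⁻¹ ≠ 2) (hw2' : w + w⁻¹ ≠ -2) :
    (Hmat (m + n) 0 - Dst m n (z + z⁻¹) (w + w⁻¹)).det =
      (-1) ^ (m + n) * gammaF m n z w / ((z - z⁻¹) * (w - w⁻¹)) := by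
  have hzc := sub_inv_ne_zero z hz hz2 hz2'
  have hwc := sub_inv_ne_zero w hw hw2 hw2'
  have hc : (z - z⁻¹) * (w - w⁻¹) ≠ 0 := mul_ne_zero hzc hwc
  have key := main_aux z w hz hw (m + n) m n rfl
  rw [pencil_eq_tri]
  rw [eq_div_iff hc]
  rw [key]
  have hg : gammaF m n z w =
      (z ^ (m + 1) - z⁻¹ ^ (m + 1)) * (w ^ (n + 1) - w⁻¹ ^ (n + 1)) -
        (z ^ m - z⁻¹ ^ m) * (w ^ n - w⁻¹ ^ n) := by
    have h1 : z ^ (-(↑m + 1) : ℤ) = z⁻¹ ^ (m + 1) := by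
      rw [show (-(↑m + 1) : ℤ) = -((m + 1 : ℕ) : ℤ) from by push_cast; ring,
        _root_.zpow_neg, zpow_natCast, inv_pow]
    have h2 : w ^ (-(↑n + 1) : ℤ) = w⁻¹ ^ (n + 1) := by
      rw [show (-(↑n + 1) : ℤ) = -((n + 1 : ℕ) : ℤ) from by push_cast; ring,
        _root_.zpow_neg, zpow_natCast, inv_pow]
    have h3 : z ^ (-(↑m) : ℤ) = z⁻¹ ^ m := by
      rw [_root_.zpow_neg, zpow_natCast, inv_pow]
    have h4 : w ^ (-(↑n) : ℤ) = w⁻¹ ^ n := by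
      rw [_root_.zpow_neg, zpow_natCast, inv_pow]
    rw [gammaF, h1, h2, h3, h4]
  rw [hg]
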